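/- Let S be a Polish space and suppose ρ_1 ≤_cv ρ_2 in the convex order on P(P(S)). Then the first moment measures coincide, ρ_1^(1) = ρ_2^(1), and for every bounded measurable f: S → ℝ, ∫ ρ_1^(2)(dx,dy) f(x)f(y) ≤ ∫ ρ_2^(2)(dx,dy) f(x)f(y), where ρ^(2) := E[ξ ⊗ ξ] is the second moment measure. -/

import Mathlib

open MeasureTheory ProbabilityTheory
open scoped ENNReal

section Helpers

variable {T : Type*} [MeasurableSpace T]

lemma my_integrable_of_bound {α : Type*} [MeasurableSpace α] (μ : Measure α) [IsFiniteMeasure μ]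
    {h : α → ℝ} (hh : AEStronglyMeasurable h μ) {C : ℝ} (hC : ∀ x, |h x| ≤ C) :
    Integrable h μ :=
  ⟨hh, HasFiniteIntegral.of_bounded (C := C) (Filter.Eventually.of_forall fun x => by
    simpa [Real.norm_eq_abs] using hC x)⟩

lemma my_integral_bind {Ω : Type*} [MeasurableSpace Ω] (P : Measure Ω) [IsFiniteMeasure P]
    (Ξ : Ω → Measure T) (hΞ : Measurable Ξ) (hp : ∀ ω, IsProbabilityMeasure (Ξ ω))
    {h : T → ℝ} (hh : Measurable h) {C : ℝ} (hC0 : 0 ≤ C) (hC : ∀ t, |h t| ≤ C) :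
    ∫ t, h t ∂(P.bind Ξ) = ∫ ω, ∫ t, h t ∂(Ξ ω) ∂P := by
  classical
  set p : T → ℝ≥0∞ := fun t => ENNReal.ofReal (h t) with hp_def
  set n : T → ℝ≥0∞ := fun t => ENNReal.ofReal (-h t) with hn_def
  have hpm : Measurable p := hh.ennreal_ofReal
  have hnm : Measurable n := hh.neg.ennreal_ofReal
  haveI hfin : IsFiniteMeasure (P.bind Ξ) := by
    constructor
    rw [Measure.bind_apply MeasurableSet.univ hΞ.aemeasurable]
    have : ∀ ω, Ξ ω Set.univ = 1 := fun ω => (hp ω).measure_univ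
    simp only [this, lintegral_one]
    exact measure_lt_top _ _
  have hint : Integrable h (P.bind Ξ) := my_integrable_of_bound _ hh.aestronglyMeasurable hC
  have hIω : ∀ ω, Integrable h (Ξ ω) := fun ω => by
    haveI := hp ω
    exact my_integrable_of_bound _ hh.aestronglyMeasurable hC
  have hLp_le : ∀ ω, ∫⁻ t, p t ∂(Ξ ω) ≤ ENNReal.ofReal C := by
    intro ω
    haveI := hp ω
    calc ∫⁻ t, p t ∂(Ξ ω) ≤ ∫⁻ _, ENNReal.ofReal C ∂(Ξ ω) :=
          lintegral_mono fun t => ENNReal.ofReal_le_ofReal ((le_abs_self _).trans (hC t))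
      _ = ENNReal.ofReal C := by simp
  have hLn_le : ∀ ω, ∫⁻ t, n t ∂(Ξ ω) ≤ ENNReal.ofReal C := by
    intro ω
    haveI := hp ω
    calc ∫⁻ t, n t ∂(Ξ ω) ≤ ∫⁻ _, ENNReal.ofReal C ∂(Ξ ω) :=
          lintegral_mono fun t => ENNReal.ofReal_le_ofReal ((neg_le_abs _).trans (hC t))
      _ = ENNReal.ofReal C := by simp
  have hLpm : Measurable fun ω => ∫⁻ t, p t ∂(Ξ ω) :=
    (Measure.measurable_lintegral hpm).comp hΞ
  have hLnm : Measurable fun ω => ∫⁻ t, n t ∂(Ξ ω) :=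
    (Measure.measurable_lintegral hnm).comp hΞ
  have hIp : Integrable (fun ω => (∫⁻ t, p t ∂(Ξ ω)).toReal) P := by
    refine my_integrable_of_bound _ (hLpm.ennreal_toReal).aestronglyMeasurable (C := C) fun ω => ?_
    rw [abs_of_nonneg ENNReal.toReal_nonneg]
    exact ENNReal.toReal_le_of_le_ofReal hC0 (hLp_le ω)
  have hIn : Integrable (fun ω => (∫⁻ t, n t ∂(Ξ ω)).toReal) P := by
    refine my_integrable_of_bound _ (hLnm.ennreal_toReal).aestronglyMeasurable (C := C) fun ω => ?_
    rw [abs_of_nonneg ENNReal.toReal_nonneg]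
    exact ENNReal.toReal_le_of_le_ofReal hC0 (hLn_le ω)
  have hstep : ∫ ω, ∫ t, h t ∂(Ξ ω) ∂P
      = ∫ ω, ((∫⁻ t, p t ∂(Ξ ω)).toReal - (∫⁻ t, n t ∂(Ξ ω)).toReal) ∂P := by
    refine integral_congr_ae (Filter.Eventually.of_forall fun ω => ?_)
    exact integral_eq_lintegral_pos_part_sub_lintegral_neg_part (hIω ω)
  rw [integral_eq_lintegral_pos_part_sub_lintegral_neg_part hint, hstep,
    integral_sub hIp hIn,
    integral_toReal hLpm.aemeasurable
      (Filter.Eventually.of_forall fun ω => lt_of_le_of_lt (hLp_le ω) ENNReal.ofReal_lt_top),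
    integral_toReal hLnm.aemeasurable
      (Filter.Eventually.of_forall fun ω => lt_of_le_of_lt (hLn_le ω) ENNReal.ofReal_lt_top),
    Measure.lintegral_bind hΞ.aemeasurable hpm.aemeasurable, Measure.lintegral_bind hΞ.aemeasurable hnm.aemeasurable]

lemma my_measurable_prodSelf [DecidablePred (IsProbabilityMeasure (α := T))] :
    Measurable (fun μ : Measure T => if IsProbabilityMeasure μ then μ.prod μ else 0) := by
  have hMp : MeasurableSet {μ : Measure T | IsProbabilityMeasure μ} := by
    have : {μ : Measure T | IsProbabilityMeasure μ} = (fun μ : Measure T => μ Set.univ) ⁻¹' {1} := by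
      ext μ; simp [isProbabilityMeasure_iff]
    rw [this]
    exact Measure.measurable_coe MeasurableSet.univ (measurableSet_singleton 1)
  have key : ∀ C : Set (T × T), MeasurableSet C →
      Measurable (fun μ : Measure T =>
        Set.indicator {μ : Measure T | IsProbabilityMeasure μ} (fun μ => μ.prod μ C) μ) := by
    refine MeasurableSpace.induction_on_inter generateFrom_prod.symm isPiSystem_prod ?_ ?_ ?_ ?_
    · simp only [measure_empty]
      exact measurable_const.indicator hMp
    · rintro t ⟨A, hA, B, hB, rfl⟩
      have heq : (fun μ : Measure T =>
          Set.indicator {μ : Measure T | IsProbabilityMeasure μ} (fun μ => μ.prod μ (A ×ˢ B)) μ)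
          = fun μ : Measure T =>
          Set.indicator {μ : Measure T | IsProbabilityMeasure μ} (fun μ => μ A * μ B) μ := by
        funext μ
        by_cases h : IsProbabilityMeasure μ
        · haveI := h
          simp only [Set.indicator_of_mem (Set.mem_setOf.mpr h), Measure.prod_prod]
        · simp [Set.indicator_of_notMem, h]
      rw [heq]
      exact ((Measure.measurable_coe hA).mul (Measure.measurable_coe hB)).indicator hMp
    · intro t ht hrec
      have heq : (fun μ : Measure T =>
          Set.indicator {μ : Measure T | IsProbabilityMeasure μ} (fun μ => μ.prod μ tᶜ) μ)
          = fun μ : Measure T =>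
          (Set.indicator {μ : Measure T | IsProbabilityMeasure μ} (fun _ => (1 : ℝ≥0∞)) μ)
          - (Set.indicator {μ : Measure T | IsProbabilityMeasure μ} (fun μ => μ.prod μ t) μ) := by
        funext μ
        by_cases h : IsProbabilityMeasure μ
        · haveI := h
          simp only [Set.indicator_of_mem (Set.mem_setOf.mpr h)]
          rw [measure_compl ht (measure_ne_top _ _), measure_univ]
        · simp [Set.indicator_of_notMem, h]
      rw [heq]
      exact (measurable_const.indicator hMp).sub hrec
    · intro g hdisj hmeas hrec
      have heq : (fun μ : Measure T =>
          Set.indicator {μ : Measure T | IsProbabilityMeasure μ} (fun μ => μ.prod μ (⋃ i, g i)) μ)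
          = fun μ : Measure T => ∑' i, Set.indicator {μ : Measure T | IsProbabilityMeasure μ}
              (fun μ => μ.prod μ (g i)) μ := by
        funext μ
        by_cases h : IsProbabilityMeasure μ
        · simp only [Set.indicator_of_mem (Set.mem_setOf.mpr h)]
          exact measure_iUnion hdisj hmeas
        · simp [Set.indicator_of_notMem, h, tsum_zero]
      rw [heq]
      exact Measurable.ennreal_tsum hrec
  refine Measure.measurable_of_measurable_coe _ fun C hC => ?_
  have : (fun μ : Measure T => (if IsProbabilityMeasure μ then μ.prod μ else 0) C)
      = fun μ : Measure T =>
        Set.indicator {μ : Measure T | IsProbabilityMeasure μ} (fun μ => μ.prod μ C) μ := by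
    funext μ
    by_cases h : IsProbabilityMeasure μ <;> simp [h]
  rw [this]
  exact key C hC

end Helpers

/-- `ξ` is a regular version of the conditional distribution of `X` given the sub-σ-field `m`. -/
def IsCondLaw {Ω S : Type*} [mΩ : MeasurableSpace Ω] [MeasurableSpace S]
    (P : Measure Ω) (m : MeasurableSpace Ω) (X : Ω → S) (ξ : Ω → Measure S) : Prop :=
  Measurable[m] ξ ∧ (∀ ω, IsProbabilityMeasure (ξ ω)) ∧
    ∀ A : Set S, MeasurableSet A → ∀ B : Set Ω, MeasurableSet[m] B →
      P (B ∩ X ⁻¹' A) = ∫⁻ ω in B, ξ ω A ∂P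

section CondLaw

variable {Ω S : Type*} {m : MeasurableSpace Ω} [mΩ : MeasurableSpace Ω] [MeasurableSpace S]
  {P : Measure Ω} {X : Ω → S} {ξ : Ω → Measure S}

lemma my_first_moment (hP : IsProbabilityMeasure P) (hm : m ≤ mΩ) (hX : Measurable X)
    (hcl : IsCondLaw P m X ξ) :
    (Measure.map ξ P).bind id = Measure.map X P := by
  haveI := hP
  have hξ : Measurable ξ := hcl.1.mono hm le_rfl
  ext A hA
  rw [Measure.bind_apply hA measurable_id.aemeasurable]
  simp only [id_eq]
  rw [lintegral_map (Measure.measurable_coe hA) hξ]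
  have := hcl.2.2 A hA Set.univ MeasurableSet.univ
  rw [Set.univ_inter, Measure.restrict_univ] at this
  rw [Measure.map_apply hX hA, this]

lemma my_g_measurable (hcl : IsCondLaw P m X ξ) {f : S → ℝ} (hf : Measurable f)
    {C : ℝ} (hC : ∀ x, |f x| ≤ C) :
    Measurable[m] fun ω => ∫ s, f s ∂(ξ ω) := by
  have heq : (fun ω => ∫ s, f s ∂(ξ ω))
      = fun ω => (∫⁻ s, ENNReal.ofReal (f s) ∂(ξ ω)).toReal
        - (∫⁻ s, ENNReal.ofReal (-f s) ∂(ξ ω)).toReal := by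
    funext ω
    haveI := hcl.2.1 ω
    exact integral_eq_lintegral_pos_part_sub_lintegral_neg_part
      (my_integrable_of_bound _ hf.aestronglyMeasurable hC)
  rw [heq]
  exact Measurable.sub
    (((Measure.measurable_lintegral hf.ennreal_ofReal).comp hcl.1).ennreal_toReal)
    (((Measure.measurable_lintegral hf.neg.ennreal_ofReal).comp hcl.1).ennreal_toReal)

lemma my_g_bound (hp : ∀ ω, IsProbabilityMeasure (ξ ω)) {f : S → ℝ} (hf : Measurable f)
    {C : ℝ} (hC : ∀ x, |f x| ≤ C) (ω : Ω) :
    |∫ s, f s ∂(ξ ω)| ≤ C := by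
  haveI := hp ω
  calc |∫ s, f s ∂(ξ ω)| ≤ ∫ s, |f s| ∂(ξ ω) := by
        simpa [Real.norm_eq_abs] using norm_integral_le_integral_norm (μ := ξ ω) f
    _ ≤ ∫ _, C ∂(ξ ω) := by
        refine integral_mono (my_integrable_of_bound _ hf.aestronglyMeasurable hC).abs
          (integrable_const C) ?_
        intro s; exact hC s
    _ = C := by simp

lemma my_setIntegral (hP : IsProbabilityMeasure P) (hm : m ≤ mΩ) (hX : Measurable X)
    (hcl : IsCondLaw P m X ξ) {f : S → ℝ} (hf : Measurable f)
    {C : ℝ} (hC0 : 0 ≤ C) (hC : ∀ x, |f x| ≤ C) {B : Set Ω} (hB : MeasurableSet[m] B) :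
    ∫ ω in B, (∫ s, f s ∂(ξ ω)) ∂P = ∫ ω in B, f (X ω) ∂P := by
  haveI := hP
  have hξ : Measurable ξ := hcl.1.mono hm le_rfl
  have hbind : (P.restrict B).bind ξ = Measure.map X (P.restrict B) := by
    ext A hA
    rw [Measure.bind_apply hA hξ.aemeasurable, Measure.map_apply hX hA,
      Measure.restrict_apply (hX hA), Set.inter_comm, hcl.2.2 A hA B hB]
  calc ∫ ω in B, (∫ s, f s ∂(ξ ω)) ∂P
      = ∫ t, f t ∂((P.restrict B).bind ξ) :=
        (my_integral_bind (P.restrict B) ξ hξ hcl.2.1 hf hC0 hC).symm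
    _ = ∫ t, f t ∂(Measure.map X (P.restrict B)) := by rw [hbind]
    _ = ∫ ω in B, f (X ω) ∂P := integral_map hX.aemeasurable hf.aestronglyMeasurable

lemma my_second_moment (hP : IsProbabilityMeasure P)
    (hξ : Measurable ξ) (hp : ∀ ω, IsProbabilityMeasure (ξ ω)) {f : S → ℝ} (hf : Measurable f)
    {C : ℝ} (hC0 : 0 ≤ C) (hC : ∀ x, |f x| ≤ C) :
    ∫ q, f q.1 * f q.2 ∂((Measure.map ξ P).bind fun μ => μ.prod μ)
      = ∫ ω, (∫ s, f s ∂(ξ ω)) * (∫ s, f s ∂(ξ ω)) ∂P := by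
  classical
  haveI := hP
  set Φ : Measure S → Measure (S × S) :=
    fun μ => if IsProbabilityMeasure μ then μ.prod μ else 0 with hΦ_def
  have hΦ : Measurable Φ := my_measurable_prodSelf
  have hMp : MeasurableSet {μ : Measure S | IsProbabilityMeasure μ} := by
    have : {μ : Measure S | IsProbabilityMeasure μ}
        = (fun μ : Measure S => μ Set.univ) ⁻¹' {1} := by
      ext μ; simp [isProbabilityMeasure_iff]
    rw [this]
    exact Measure.measurable_coe MeasurableSet.univ (measurableSet_singleton 1)
  have hae : (fun μ : Measure S => μ.prod μ) =ᵐ[Measure.map ξ P] Φ := by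
    have h1 : ∀ᵐ μ ∂(Measure.map ξ P), IsProbabilityMeasure μ := by
      rw [MeasureTheory.ae_map_iff hξ.aemeasurable hMp]
      exact Filter.Eventually.of_forall fun ω => hp ω
    filter_upwards [h1] with μ hμ
    simp [hΦ_def, hμ]
  have hΞ₂ : Measurable fun ω => (ξ ω).prod (ξ ω) := by
    let κ : Kernel Ω S := ⟨ξ, hξ⟩
    haveI : IsMarkovKernel κ := ⟨fun ω => by exact hp ω⟩
    have h2 : (fun ω => (ξ ω).prod (ξ ω)) = fun ω => (κ ×ₖ κ) ω := by
      funext ω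
      rw [Kernel.prod_apply]
      rfl
    rw [h2]
    exact (κ ×ₖ κ).measurable
  have hbind_eq : (Measure.map ξ P).bind (fun μ => μ.prod μ)
      = P.bind fun ω => (ξ ω).prod (ξ ω) := by
    have hmap : Measure.map (fun μ : Measure S => μ.prod μ) (Measure.map ξ P)
        = Measure.map (fun ω => (ξ ω).prod (ξ ω)) P := by
      rw [Measure.map_congr hae, Measure.map_map hΦ hξ]
      congr 1
      funext ω
      simp [Function.comp, hΦ_def, hp ω]
    simp only [Measure.bind, hmap]
  have hprodprob : ∀ ω, IsProbabilityMeasure ((ξ ω).prod (ξ ω)) := fun ω => by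
    haveI := hp ω; infer_instance
  have hmulm : Measurable fun q : S × S => f q.1 * f q.2 :=
    (hf.comp measurable_fst).mul (hf.comp measurable_snd)
  have hmulb : ∀ q : S × S, |f q.1 * f q.2| ≤ C * C := fun q => by
    rw [abs_mul]
    exact mul_le_mul (hC _) (hC _) (abs_nonneg _) hC0
  rw [hbind_eq, my_integral_bind P _ hΞ₂ hprodprob hmulm (mul_nonneg hC0 hC0) hmulb]
  refine integral_congr_ae (Filter.Eventually.of_forall fun ω => ?_)
  haveI := hp ω
  exact integral_prod_mul f f

end CondLaw

section CondExp

variable {Ω S : Type*} {m : MeasurableSpace Ω} [mΩ : MeasurableSpace Ω] [MeasurableSpace S]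
  {P : Measure Ω} {X : Ω → S} {ξ : Ω → Measure S}

lemma my_condexp (hP : IsProbabilityMeasure P) (hm : m ≤ mΩ) (hX : Measurable X)
    (hcl : IsCondLaw P m X ξ) {f : S → ℝ} (hf : Measurable f)
    {C : ℝ} (hC0 : 0 ≤ C) (hC : ∀ x, |f x| ≤ C) :
    (fun ω => ∫ s, f s ∂(ξ ω)) =ᵐ[P] P[fun ω => f (X ω)|m] := by
  haveI := hP
  haveI : SigmaFinite (P.trim hm) := inferInstance
  have hYint : Integrable (fun ω => f (X ω)) P :=
    my_integrable_of_bound _ (hf.comp hX).aestronglyMeasurable (fun ω => hC _)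
  have hgmeas : Measurable fun ω => ∫ s, f s ∂(ξ ω) :=
    (my_g_measurable hcl hf hC).mono hm le_rfl
  have hgint : Integrable (fun ω => ∫ s, f s ∂(ξ ω)) P :=
    my_integrable_of_bound _ hgmeas.aestronglyMeasurable (my_g_bound hcl.2.1 hf hC)
  refine ae_eq_condExp_of_forall_setIntegral_eq hm hYint (fun s _ _ => hgint.integrableOn)
    (fun s hs _ => my_setIntegral hP hm hX hcl hf hC0 hC hs) ?_
  exact StronglyMeasurable.aestronglyMeasurable ((my_g_measurable hcl hf hC).stronglyMeasurable)

end CondExp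

section Main

variable {Ω S : Type*} {F₁ F₂ : MeasurableSpace Ω} [mΩ : MeasurableSpace Ω] [MeasurableSpace S]
  {P : Measure Ω} {X : Ω → S} {ξ₁ ξ₂ : Ω → Measure S}

lemma my_main (hP : IsProbabilityMeasure P) (h12 : F₁ ≤ F₂) (h2 : F₂ ≤ mΩ) (hX : Measurable X)
    (hcl₁ : IsCondLaw P F₁ X ξ₁) (hcl₂ : IsCondLaw P F₂ X ξ₂)
    {f : S → ℝ} (hf : Measurable f) {C : ℝ} (hC0 : 0 ≤ C) (hC : ∀ x, |f x| ≤ C) :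
    ∫ q, f q.1 * f q.2 ∂((Measure.map ξ₁ P).bind fun μ => μ.prod μ)
      ≤ ∫ q, f q.1 * f q.2 ∂((Measure.map ξ₂ P).bind fun μ => μ.prod μ) := by
  haveI := hP
  have h1 : F₁ ≤ mΩ := h12.trans h2
  set g₁ : Ω → ℝ := fun ω => ∫ s, f s ∂(ξ₁ ω) with hg₁def
  set g₂ : Ω → ℝ := fun ω => ∫ s, f s ∂(ξ₂ ω) with hg₂def
  set Y : Ω → ℝ := fun ω => f (X ω) with hYdef
  rw [my_second_moment hP (hcl₁.1.mono h1 le_rfl) hcl₁.2.1 hf hC0 hC,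
      my_second_moment hP (hcl₂.1.mono h2 le_rfl) hcl₂.2.1 hf hC0 hC]
  have hg₁m : Measurable[F₁] g₁ := my_g_measurable hcl₁ hf hC
  have hg₂m : Measurable[F₂] g₂ := my_g_measurable hcl₂ hf hC
  have hg₁meas : Measurable g₁ := hg₁m.mono h1 le_rfl
  have hg₂meas : Measurable g₂ := hg₂m.mono h2 le_rfl
  have hg₁b : ∀ ω, |g₁ ω| ≤ C := my_g_bound hcl₁.2.1 hf hC
  have hg₂b : ∀ ω, |g₂ ω| ≤ C := my_g_bound hcl₂.2.1 hf hC
  have hYmeas : Measurable Y := hf.comp hX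
  have hYb : ∀ ω, |Y ω| ≤ C := fun ω => hC _
  have int_prod : ∀ a b : Ω → ℝ, Measurable a → Measurable b → (∀ ω, |a ω| ≤ C) →
      (∀ ω, |b ω| ≤ C) → Integrable (fun ω => a ω * b ω) P := by
    intro a b ha hb hba hbb
    refine my_integrable_of_bound _ ((ha.mul hb).aestronglyMeasurable) (C := C * C) fun ω => ?_
    rw [abs_mul]
    exact mul_le_mul (hba ω) (hbb ω) (abs_nonneg _) hC0
  have hYint : Integrable Y P := my_integrable_of_bound _ hYmeas.aestronglyMeasurable hYb
  haveI hsf2 : SigmaFinite (P.trim h2) := inferInstance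
  haveI hsf1 : SigmaFinite (P.trim h1) := inferInstance
  have hc₁ : g₁ =ᵐ[P] P[Y|F₁] := my_condexp hP h1 hX hcl₁ hf hC0 hC
  have hc₂ : g₂ =ᵐ[P] P[Y|F₂] := my_condexp hP h2 hX hcl₂ hf hC0 hC
  have key12 : ∫ ω, g₁ ω * g₂ ω ∂P = ∫ ω, g₁ ω * Y ω ∂P := by
    calc ∫ ω, g₁ ω * g₂ ω ∂P = ∫ ω, g₁ ω * (P[Y|F₂]) ω ∂P := by
          refine integral_congr_ae ?_
          filter_upwards [hc₂] with ω hω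
          rw [hω]
      _ = ∫ ω, (P[g₁ * Y|F₂]) ω ∂P := by
          refine integral_congr_ae ?_
          exact (condExp_mul_of_stronglyMeasurable_left ((hg₁m.mono h12 le_rfl).stronglyMeasurable)
            (int_prod g₁ Y hg₁meas hYmeas hg₁b hYb) hYint).symm
      _ = ∫ ω, (g₁ * Y) ω ∂P := integral_condExp h2
      _ = ∫ ω, g₁ ω * Y ω ∂P := rfl
  have key11 : ∫ ω, g₁ ω * g₁ ω ∂P = ∫ ω, g₁ ω * Y ω ∂P := by
    calc ∫ ω, g₁ ω * g₁ ω ∂P = ∫ ω, g₁ ω * (P[Y|F₁]) ω ∂P := by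
          refine integral_congr_ae ?_
          filter_upwards [hc₁] with ω hω
          nth_rewrite 2 [hω]
          rfl
      _ = ∫ ω, (P[g₁ * Y|F₁]) ω ∂P := by
          refine integral_congr_ae ?_
          exact (condExp_mul_of_stronglyMeasurable_left (hg₁m.stronglyMeasurable)
            (int_prod g₁ Y hg₁meas hYmeas hg₁b hYb) hYint).symm
      _ = ∫ ω, (g₁ * Y) ω ∂P := integral_condExp h1
      _ = ∫ ω, g₁ ω * Y ω ∂P := rfl
  have int11 := int_prod g₁ g₁ hg₁meas hg₁meas hg₁b hg₁b
  have int22 := int_prod g₂ g₂ hg₂meas hg₂meas hg₂b hg₂b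
  have int12 := int_prod g₁ g₂ hg₁meas hg₂meas hg₁b hg₂b
  have hnn : 0 ≤ ∫ ω, (g₂ ω - g₁ ω) * (g₂ ω - g₁ ω) ∂P :=
    integral_nonneg fun ω => mul_self_nonneg _
  have sqint : Integrable (fun ω => (g₂ ω - g₁ ω) * (g₂ ω - g₁ ω)) P := by
    refine my_integrable_of_bound _
      (((hg₂meas.sub hg₁meas).mul (hg₂meas.sub hg₁meas)).aestronglyMeasurable)
      (C := (C + C) * (C + C)) fun ω => ?_
    rw [abs_mul]
    have hsub : |g₂ ω - g₁ ω| ≤ C + C :=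
      (abs_sub _ _).trans (add_le_add (hg₂b ω) (hg₁b ω))
    exact mul_le_mul hsub hsub (abs_nonneg _) (by linarith)
  have hsum : ∫ ω, (g₂ ω - g₁ ω) * (g₂ ω - g₁ ω) ∂P + 2 * ∫ ω, g₁ ω * g₂ ω ∂P
      = ∫ ω, g₂ ω * g₂ ω ∂P + ∫ ω, g₁ ω * g₁ ω ∂P := by
    rw [← integral_const_mul, ← integral_add sqint (int12.const_mul 2),
      ← integral_add int22 int11]
    congr 1
    funext ω
    ring
  linarith [hnn, hsum, key12, key11]

end Main

/-- The convex order on laws of random probability measures. -/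
def ConvexOrder {S : Type*} [MeasurableSpace S] (ρ₁ ρ₂ : Measure (Measure S)) : Prop :=
  ∃ (Ω : Type) (mΩ : MeasurableSpace Ω) (P : Measure Ω)
    (F₁ F₂ : MeasurableSpace Ω) (X : Ω → S) (ξ₁ ξ₂ : Ω → Measure S),
    IsProbabilityMeasure P ∧ F₁ ≤ F₂ ∧ F₂ ≤ mΩ ∧ Measurable[mΩ] X ∧
    @IsCondLaw Ω S mΩ _ P F₁ X ξ₁ ∧ @IsCondLaw Ω S mΩ _ P F₂ X ξ₂ ∧
    ρ₁ = @Measure.map Ω (Measure S) mΩ _ ξ₁ P ∧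
    ρ₂ = @Measure.map Ω (Measure S) mΩ _ ξ₂ P

/-- **First and second moment measures.** If `ρ₁ ≤_cv ρ₂` in the convex order, then the first
moment measures coincide and the second moment measures are ordered against products
`f(x)f(y)` for every bounded measurable `f : S → ℝ`. -/
theorem stmt8 {S : Type*} [MeasurableSpace S] [TopologicalSpace S] [PolishSpace S] [BorelSpace S]
    (ρ₁ ρ₂ : Measure (Measure S)) (h : ConvexOrder ρ₁ ρ₂) :
    ρ₁.bind id = ρ₂.bind id ∧
      ∀ f : S → ℝ, Measurable f → (∃ C, ∀ x, |f x| ≤ C) →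
        ∫ p, f p.1 * f p.2 ∂(ρ₁.bind fun ξ => ξ.prod ξ)
          ≤ ∫ p, f p.1 * f p.2 ∂(ρ₂.bind fun ξ => ξ.prod ξ) := by
  obtain ⟨Ω, mΩ, P, F₁, F₂, X, ξ₁, ξ₂, hP, h12, h2, hX, hcl₁, hcl₂, hρ₁, hρ₂⟩ := h
  constructor
  · rw [hρ₁, hρ₂, my_first_moment (mΩ := mΩ) hP (h12.trans h2) hX hcl₁,
      my_first_moment (mΩ := mΩ) hP h2 hX hcl₂]
  · intro f hf hbd
    obtain ⟨C, hC⟩ := hbd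
    have hC' : ∀ x, |f x| ≤ max C 0 := fun x => (hC x).trans (le_max_left _ _)
    rw [hρ₁, hρ₂]
    exact my_main (mΩ := mΩ) hP h12 h2 hX hcl₁ hcl₂ hf (le_max_right _ _) hC'
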